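/- Let R be an integral domain and F a finitely generated free abelian group. Then every unit of the group ring R[F] is of the form r·f where r is a unit of R and f ∈ F. -/

import Mathlib

open AddMonoidAlgebra

private lemma aux_mul_apply_max {R A : Type*} [CommRing R] [AddCommGroup A] [LinearOrder A] [IsOrderedAddMonoid A]
    {p q : AddMonoidAlgebra R A} {ap aq : A}
    (hp : ∀ a ∈ p.coeff.support, a ≤ ap) (hq : ∀ a ∈ q.coeff.support, a ≤ aq) :
    (p * q).coeff (ap + aq) = p.coeff ap * q.coeff aq := by
  classical
  rw [AddMonoidAlgebra.mul_apply, Finsupp.sum]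
  rw [Finset.sum_eq_single ap]
  · rw [Finsupp.sum, Finset.sum_eq_single aq]
    · rw [if_pos rfl]
    · intro a' ha' hne
      exact if_neg fun he => (add_lt_add_right ((hq a' ha').lt_of_ne hne) ap).ne he
    · intro hns
      rw [if_pos rfl, Finsupp.notMem_support_iff.1 hns, mul_zero]
  · intro a ha hne
    rw [Finsupp.sum]
    refine Finset.sum_eq_zero fun a' ha' => if_neg fun he => ?_
    exact (add_lt_add_of_lt_of_le ((hp a ha).lt_of_ne hne) (hq a' ha')).ne he
  · intro hns
    rw [Finsupp.sum]
    refine Finset.sum_eq_zero fun a' _ => ?_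
    rw [Finsupp.notMem_support_iff.1 hns, zero_mul, ite_self]

private lemma aux_mul_apply_min {R A : Type*} [CommRing R] [AddCommGroup A] [LinearOrder A] [IsOrderedAddMonoid A]
    {p q : AddMonoidAlgebra R A} {ap aq : A}
    (hp : ∀ a ∈ p.coeff.support, ap ≤ a) (hq : ∀ a ∈ q.coeff.support, aq ≤ a) :
    (p * q).coeff (ap + aq) = p.coeff ap * q.coeff aq := by
  classical
  rw [AddMonoidAlgebra.mul_apply, Finsupp.sum]
  rw [Finset.sum_eq_single ap]
  · rw [Finsupp.sum, Finset.sum_eq_single aq]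
    · rw [if_pos rfl]
    · intro a' ha' hne
      exact if_neg fun he => (add_lt_add_right ((hq a' ha').lt_of_ne (Ne.symm hne)) ap).ne' he
    · intro hns
      rw [if_pos rfl, Finsupp.notMem_support_iff.1 hns, mul_zero]
  · intro a ha hne
    rw [Finsupp.sum]
    refine Finset.sum_eq_zero fun a' ha' => if_neg fun he => ?_
    exact (add_lt_add_of_lt_of_le ((hp a ha).lt_of_ne (Ne.symm hne)) (hq a' ha')).ne' he
  · intro hns
    rw [Finsupp.sum]
    refine Finset.sum_eq_zero fun a' _ => ?_
    rw [Finsupp.notMem_support_iff.1 hns, zero_mul, ite_self]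

private lemma aux_unit_key {R A : Type*} [CommRing R] [IsDomain R]
    [AddCommGroup A] [LinearOrder A] [IsOrderedAddMonoid A]
    (u v : AddMonoidAlgebra R A) (h : u * v = 1) :
    ∃ (r : R) (a : A), IsUnit r ∧ u = AddMonoidAlgebra.single a r := by
  classical
  have hu0 : u ≠ 0 := by
    rintro rfl
    rw [zero_mul] at h
    exact one_ne_zero h.symm
  have hv0 : v ≠ 0 := by
    rintro rfl
    rw [mul_zero] at h
    exact one_ne_zero h.symm
  have hsu : u.coeff.support.Nonempty := Finsupp.support_nonempty_iff.2 (mt AddMonoidAlgebra.coeff_eq_zero.1 hu0)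
  have hsv : v.coeff.support.Nonempty := Finsupp.support_nonempty_iff.2 (mt AddMonoidAlgebra.coeff_eq_zero.1 hv0)
  set a := u.coeff.support.max' hsu with ha
  set a' := u.coeff.support.min' hsu with ha'
  set b := v.coeff.support.max' hsv with hb
  set b' := v.coeff.support.min' hsv with hb'
  have hone : ((1 : AddMonoidAlgebra R A) : AddMonoidAlgebra R A).coeff
      = Finsupp.single 0 1 := rfl
  have h1 : (u * v).coeff (a + b) = u.coeff a * v.coeff b :=
    aux_mul_apply_max (fun x hx => Finset.le_max' _ _ hx) (fun x hx => Finset.le_max' _ _ hx)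
  have h2 : (u * v).coeff (a' + b') = u.coeff a' * v.coeff b' :=
    aux_mul_apply_min (fun x hx => Finset.min'_le _ _ hx) (fun x hx => Finset.min'_le _ _ hx)
  have hmem1 : u.coeff a * v.coeff b ≠ 0 :=
    mul_ne_zero (Finsupp.mem_support_iff.1 (u.coeff.support.max'_mem hsu))
      (Finsupp.mem_support_iff.1 (v.coeff.support.max'_mem hsv))
  have hmem2 : u.coeff a' * v.coeff b' ≠ 0 :=
    mul_ne_zero (Finsupp.mem_support_iff.1 (u.coeff.support.min'_mem hsu))
      (Finsupp.mem_support_iff.1 (v.coeff.support.min'_mem hsv))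
  have hab : a + b = 0 := by
    by_contra hne
    rw [h, hone, Finsupp.single_apply, if_neg (fun he => hne he.symm)] at h1
    exact hmem1 h1.symm
  have hab' : a' + b' = 0 := by
    by_contra hne
    rw [h, hone, Finsupp.single_apply, if_neg (fun he => hne he.symm)] at h2
    exact hmem2 h2.symm
  have haa : a' = a := by
    by_contra hne
    have hlt : a' < a := (u.coeff.support.min'_le _ (u.coeff.support.max'_mem hsu)).lt_of_ne hne
    have : a' + b' < a + b :=
      add_lt_add_of_lt_of_le hlt (v.coeff.support.min'_le _ (v.coeff.support.max'_mem hsv))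
    rw [hab, hab'] at this
    exact lt_irrefl _ this
  have hsupp : u.coeff.support ⊆ {a} := by
    intro c hc
    have h1c : a' ≤ c := u.coeff.support.min'_le _ hc
    have h2c : c ≤ a := u.coeff.support.le_max' _ hc
    rw [haa] at h1c
    simp [le_antisymm h2c h1c]
  have hu_eq : u = AddMonoidAlgebra.single a (u.coeff a) :=
    AddMonoidAlgebra.coeff_injective (Finsupp.support_subset_singleton.1 hsupp)
  have hcoeff : u.coeff a * v.coeff b = 1 := by
    rw [← h1, h, hone, hab, Finsupp.single_apply, if_pos rfl]
  exact ⟨u.coeff a, a, IsUnit.of_mul_eq_one _ hcoeff, hu_eq⟩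

/-- Every unit of the group ring `R[F]` of a finitely generated free abelian group `F ≅ ℤⁿ`
over an integral domain `R` is of the form `r·f` with `r` a unit of `R` and `f ∈ F`. -/
theorem units_of_groupRing_free_abelian
    (R : Type*) [CommRing R] [IsDomain R] (n : ℕ)
    (u : AddMonoidAlgebra R (Fin n →₀ ℤ)) (hu : IsUnit u) :
    ∃ (r : R) (f : Fin n →₀ ℤ), IsUnit r ∧ u = AddMonoidAlgebra.single f r := by
  obtain ⟨w, rfl⟩ := hu
  have h : (w : AddMonoidAlgebra R (Fin n →₀ ℤ)) * ↑w⁻¹ = 1 := w.mul_inv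
  obtain ⟨r, a, hr, he⟩ :=
    aux_unit_key (A := Lex (Fin n →₀ ℤ)) (w : AddMonoidAlgebra R (Fin n →₀ ℤ)) ((w⁻¹ : (AddMonoidAlgebra R (Fin n →₀ ℤ))ˣ) : AddMonoidAlgebra R (Fin n →₀ ℤ)) h
  exact ⟨r, ofLex a, hr, he⟩
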